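/- Let k ≥ 1 and let S be a finite set of indices with |S| = e ≤ k, each s ∈ S assigned a probability x_s ≥ 0 with z := Σ_{s∈S} x_s ≤ e/k ≤ 1. Draw k independent samples, where each sample equals s with probability x_s (and with probability 1 - z lands outside S). Then the probability that every element of S is sampled at least once is at least (k!/(k-e)!) · (1-z)^{k-e} · ∏_{s∈S} x_s. -/

import Mathlib

open MeasureTheory ProbabilityTheory

theorem stmt_9 {Ω : Type*} [MeasurableSpace Ω] (μ : Measure Ω) [IsProbabilityMeasure μ]
    {ι : Type*} [Fintype ι] [mι : MeasurableSpace ι] [MeasurableSingletonClass ι]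
    (k e : ℕ) (hk : 1 ≤ k) (S : Finset ι) (hcard : S.card = e) (hek : e ≤ k)
    (x : ι → ℝ) (hx : ∀ s ∈ S, 0 ≤ x s)
    (z : ℝ) (hz : z = ∑ s ∈ S, x s) (hze : z ≤ (e : ℝ) / (k : ℝ))
    (Y : Fin k → Ω → ι) (hY : ∀ t, Measurable (Y t))
    (hindep : iIndepFun Y μ)
    (hprob : ∀ t : Fin k, ∀ s ∈ S, (μ (Y t ⁻¹' {s})).toReal = x s) :
    (k.descFactorial e : ℝ) * (1 - z) ^ (k - e) * ∏ s ∈ S, x s ≤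
      (μ {ω | ∀ s ∈ S, ∃ t, Y t ω = s}).toReal := by
  classical
  subst hcard
  have hSmeas : MeasurableSet (↑S : Set ι) := S.measurableSet
  -- probability of landing in S is z
  have hzS : ∀ t, (μ (Y t ⁻¹' ↑S)).toReal = z := by
    intro t
    have hU : Y t ⁻¹' ↑S = ⋃ s ∈ S, Y t ⁻¹' {s} := by
      ext ω; simp
    rw [hU, measure_biUnion_finset]
    · rw [ENNReal.toReal_sum (fun s _ => measure_ne_top μ _), hz]
      exact Finset.sum_congr rfl fun s hs => hprob t s hs
    · intro s hs s' hs' hss'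
      exact Set.disjoint_left.2 fun ω h1 h2 => hss' (h1.symm.trans h2)
    · exact fun s _ => (hY t) (measurableSet_singleton s)
  -- probability of landing outside S is 1 - z
  have hzC : ∀ t, (μ (Y t ⁻¹' (↑S : Set ι)ᶜ)).toReal = 1 - z := by
    intro t
    rw [Set.preimage_compl, measure_compl ((hY t) hSmeas) (measure_ne_top μ _),
      measure_univ, ENNReal.toReal_sub_of_le prob_le_one ENNReal.one_ne_top]
    simp [hzS t]
  -- the family of events indexed by embeddings
  set B : (↥S ↪ Fin k) → Fin k → Set ι := fun f t =>
    if h : ∃ s : ↥S, f s = t then {(h.choose : ι)} else (↑S : Set ι)ᶜ with hB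
  have hBpos : ∀ (f : ↥S ↪ Fin k) (s : ↥S), B f (f s) = {(s : ι)} := by
    intro f s
    have h : ∃ s' : ↥S, f s' = f s := ⟨s, rfl⟩
    have := h.choose_spec
    have hc : h.choose = s := f.injective this
    simp only [hB, dif_pos h, hc]
  have hBneg : ∀ (f : ↥S ↪ Fin k) (t : Fin k), (¬ ∃ s : ↥S, f s = t) → B f t = (↑S : Set ι)ᶜ := by
    intro f t h; simp only [hB, dif_neg h]
  have hBmeas : ∀ f t, MeasurableSet (B f t) := by
    intro f t
    by_cases h : ∃ s : ↥S, f s = t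
    · simp only [hB, dif_pos h]; exact measurableSet_singleton _
    · simp only [hB, dif_neg h]; exact hSmeas.compl
  set A : (↥S ↪ Fin k) → Set Ω := fun f => ⋂ t, Y t ⁻¹' B f t with hA
  have hAmeas : ∀ f, MeasurableSet (A f) :=
    fun f => MeasurableSet.iInter fun t => (hY t) (hBmeas f t)
  -- measure of each A f
  have hval : ∀ f, (μ (A f)).toReal = (1 - z) ^ (k - S.card) * ∏ s ∈ S, x s := by
    intro f
    have hmeas : μ (A f) = ∏ t, μ (Y t ⁻¹' B f t) := by
      have := hindep.measure_inter_preimage_eq_mul Finset.univ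
        (sets := B f) (fun t _ => hBmeas f t)
      simpa [hA, Set.iInter_univ] using this
    rw [hmeas, ENNReal.toReal_prod]
    have hsplit := Finset.prod_filter_mul_prod_filter_not Finset.univ
      (fun t => ∃ s : ↥S, f s = t) (fun t => (μ (Y t ⁻¹' B f t)).toReal)
    rw [← hsplit]
    have hR : Finset.univ.filter (fun t => ∃ s : ↥S, f s = t)
        = Finset.univ.image (fun s : ↥S => f s) := by
      ext t; simp
    have h1 : ∏ t ∈ Finset.univ.filter (fun t => ∃ s : ↥S, f s = t),
        (μ (Y t ⁻¹' B f t)).toReal = ∏ s ∈ S, x s := by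
      rw [hR, Finset.prod_image (fun a _ b _ h => f.injective h)]
      rw [← Finset.prod_attach S (fun s => x s)]
      refine Finset.prod_congr rfl fun s _ => ?_
      rw [hBpos f s]
      exact hprob (f s) s s.2
    have h2 : ∏ t ∈ Finset.univ.filter (fun t => ¬ ∃ s : ↥S, f s = t),
        (μ (Y t ⁻¹' B f t)).toReal = (1 - z) ^ (k - S.card) := by
      rw [Finset.prod_congr rfl (fun t ht => by
        rw [hBneg f t (Finset.mem_filter.1 ht).2, hzC t])]
      rw [Finset.prod_const]
      congr 1
      have hcardR : (Finset.univ.filter (fun t => ∃ s : ↥S, f s = t)).card = S.card := by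
        rw [hR, Finset.card_image_of_injective _ f.injective, Finset.card_univ,
          Fintype.card_coe]
      have := Finset.card_filter_add_card_filter_not
        (s := (Finset.univ : Finset (Fin k))) (p := fun t => ∃ s : ↥S, f s = t)
      rw [Finset.card_univ, Fintype.card_fin] at this
      omega
    rw [h1, h2, mul_comm]
  -- disjointness
  have hdisj : Set.Pairwise (↑(Finset.univ : Finset (↥S ↪ Fin k))) (Function.onFun Disjoint A) := by
    intro f _ g _ hfg
    rw [Function.onFun]
    rw [Set.disjoint_left]
    intro ω hf hg
    have : ∃ s : ↥S, f s ≠ g s := by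
      by_contra h
      push_neg at h
      exact hfg (DFunLike.ext f g h)
    obtain ⟨s, hs⟩ := this
    have h1 : Y (f s) ω ∈ B f (f s) := Set.mem_iInter.1 hf (f s)
    rw [hBpos] at h1
    have h2 : Y (f s) ω ∈ B g (f s) := Set.mem_iInter.1 hg (f s)
    by_cases h : ∃ s' : ↥S, g s' = f s
    · obtain ⟨s', hs'⟩ := h
      have hBg : B g (f s) = {(s' : ι)} := by rw [← hs']; exact hBpos g s'
      rw [hBg] at h2
      have hss : (s : ι) = (s' : ι) := h1.symm.trans h2
      have hss2 : s = s' := Subtype.coe_injective hss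
      subst hss2
      exact hs hs'.symm
    · rw [hBneg g (f s) h] at h2
      exact h2 (by rw [h1]; exact s.2)
  -- A f is contained in the cover event
  have hsub : ∀ f, A f ⊆ {ω | ∀ s ∈ S, ∃ t, Y t ω = s} := by
    intro f ω hω s hs
    refine ⟨f ⟨s, hs⟩, ?_⟩
    have := Set.mem_iInter.1 hω (f ⟨s, hs⟩)
    rw [hBpos] at this
    exact this
  -- combine
  have hunion : μ (⋃ f ∈ (Finset.univ : Finset (↥S ↪ Fin k)), A f) = ∑ f, μ (A f) :=
    measure_biUnion_finset hdisj (fun f _ => hAmeas f)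
  have hle : (∑ f : ↥S ↪ Fin k, μ (A f)).toReal ≤ (μ {ω | ∀ s ∈ S, ∃ t, Y t ω = s}).toReal := by
    rw [← hunion]
    refine ENNReal.toReal_mono (measure_ne_top μ _) (measure_mono ?_)
    exact Set.iUnion₂_subset fun f _ => hsub f
  refine le_trans (le_of_eq ?_) hle
  rw [ENNReal.toReal_sum (fun f _ => measure_ne_top μ _)]
  rw [Finset.sum_congr rfl (fun f _ => hval f), Finset.sum_const, Finset.card_univ,
    Fintype.card_embedding_eq, Fintype.card_coe, Fintype.card_fin, nsmul_eq_mul, mul_assoc]
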